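/- For any pair-matched word w of length 2t and any sign vector l ∈ {−1,1}^t with l ≠ (−1,...,−1), lim_{k→∞} #Π*_{L_T,k,l}(w)/k^{t+1} = 0. -/

import Mathlib

open Filter Topology

/-- A word `w` of length `h` (a function from positions to letters) is
pair-matched if every letter occurs exactly twice. -/
def PairMatched {h : ℕ} (w : Fin h → ℕ) : Prop :=
  ∀ i, (Finset.univ.filter fun j => w j = w i).card = 2

/-- A word is reducible to the empty word by successively removing adjacent
double letters. -/
inductive CatalanReducible : List ℕ → Prop
  | nil : CatalanReducible []
  | step (l₁ l₂ : List ℕ) (a : ℕ) :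
      CatalanReducible (l₁ ++ l₂) → CatalanReducible (l₁ ++ a :: a :: l₂)

/-- A word (as a function) is Catalan if its list of letters is reducible to
the empty word by successive removal of adjacent double letters. -/
def CatalanWord {h : ℕ} (w : Fin h → ℕ) : Prop := CatalanReducible (List.ofFn w)

/-- `Π*_{L_T,n}(w)`: circuits `π : {0,…,2t} → {1,…,n}` (coded by `Fin n`) with
`π(0) = π(2t)` such that matching letters of `w` force equal absolute
increments `|π(i−1) − π(i)|`. -/
def toepStar (t n : ℕ) (w : Fin (2 * t) → ℕ) : Set (Fin (2 * t + 1) → Fin n) :=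
  {π | π 0 = π (Fin.last (2 * t)) ∧ ∀ i j : Fin (2 * t), w i = w j →
    ((π i.castSucc : ℤ) - (π i.succ : ℤ)).natAbs
      = ((π j.castSucc : ℤ) - (π j.succ : ℤ)).natAbs}

/-- `Π*_{L_W,n}(w)`: circuits with `π(0) = π(2t)` such that matching letters of
`w` force equal Wigner link values `(min, max)` of consecutive entries. -/
def wignerStar (t n : ℕ) (w : Fin (2 * t) → ℕ) : Set (Fin (2 * t + 1) → Fin n) :=
  {π | π 0 = π (Fin.last (2 * t)) ∧ ∀ i j : Fin (2 * t), w i = w j →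
    (min (π i.castSucc) (π i.succ), max (π i.castSucc) (π i.succ))
      = (min (π j.castSucc) (π j.succ), max (π j.castSucc) (π j.succ))}

/-- Position `i` is a generating vertex of `w`: the first occurrence of its letter. -/
def IsGen {h : ℕ} (w : Fin h → ℕ) (i : Fin h) : Prop := ∀ j, w j = w i → i ≤ j

/-- `Π*_{L_T,n,l}(w)`: circuits in `Π*_{L_T,n}(w)` such that for every
generating vertex `i` with matching position `j`,
`π(i−1) − π(i) = l_i · (π(j−1) − π(j))`. -/
def toepStarSigned (t n : ℕ) (w : Fin (2 * t) → ℕ) (l : Fin (2 * t) → ℤ) :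
    Set (Fin (2 * t + 1) → Fin n) :=
  {π | π ∈ toepStar t n w ∧ ∀ i j : Fin (2 * t), IsGen w i → i ≠ j → w j = w i →
    (π i.castSucc : ℤ) - (π i.succ : ℤ) = l i * ((π j.castSucc : ℤ) - (π j.succ : ℤ))}

noncomputable def partner {h : ℕ} (w : Fin h → ℕ) (i : Fin h) : Fin h :=
  if hx : ∃ j, j ≠ i ∧ w j = w i then hx.choose else i

lemma partner_spec {h : ℕ} {w : Fin h → ℕ} (hw : PairMatched w) (i : Fin h) :
    partner w i ≠ i ∧ w (partner w i) = w i := by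
  have hx : ∃ j, j ≠ i ∧ w j = w i := by
    obtain ⟨b, hb, hbne⟩ := Finset.exists_mem_ne (s := Finset.univ.filter fun j => w j = w i) (by rw [hw i]; norm_num) i
    exact ⟨b, hbne, (Finset.mem_filter.mp hb).2⟩
  rw [partner, dif_pos hx]
  exact ⟨hx.choose_spec.1, hx.choose_spec.2⟩

lemma partner_unique {h : ℕ} {w : Fin h → ℕ} (hw : PairMatched w) {i j : Fin h}
    (hne : j ≠ i) (hww : w j = w i) : j = partner w i := by
  have h1 : ((Finset.univ.filter fun j => w j = w i).erase i).card ≤ 1 := by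
    rw [Finset.card_erase_of_mem (by simp), hw i]
  exact Finset.card_le_one.mp h1 j (by simp [Finset.mem_erase, hne, hww])
    (partner w i) (by simp [Finset.mem_erase, (partner_spec hw i).1, (partner_spec hw i).2])

lemma partner_partner {h : ℕ} {w : Fin h → ℕ} (hw : PairMatched w) (i : Fin h) :
    partner w (partner w i) = i :=
  (partner_unique hw (Ne.symm (partner_spec hw i).1) (partner_spec hw i).2.symm).symm

lemma isGen_iff_lt {h : ℕ} {w : Fin h → ℕ} (hw : PairMatched w) (i : Fin h) :
    IsGen w i ↔ i < partner w i := by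
  constructor
  · intro hg
    exact lt_of_le_of_ne (hg _ (partner_spec hw i).2) (Ne.symm (partner_spec hw i).1)
  · intro hlt j hj
    by_cases hji : j = i
    · exact hji.ge
    · rw [partner_unique hw hji hj]; exact hlt.le

lemma isGen_partner_of_not {h : ℕ} {w : Fin h → ℕ} (hw : PairMatched w) {i : Fin h}
    (hi : ¬ IsGen w i) : IsGen w (partner w i) := by
  rw [isGen_iff_lt hw, partner_partner hw]
  rw [isGen_iff_lt hw] at hi
  rcases lt_or_eq_of_le (not_lt.mp hi) with h' | h'
  · exact h'
  · exact absurd h' (partner_spec hw i).1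

lemma not_isGen_partner {h : ℕ} {w : Fin h → ℕ} (hw : PairMatched w) {i : Fin h}
    (hi : IsGen w i) : ¬ IsGen w (partner w i) := by
  rw [isGen_iff_lt hw, partner_partner hw]
  exact not_lt.mpr ((isGen_iff_lt hw i).mp hi).le
def dd {t n : ℕ} (π : Fin (2*t+1) → Fin n) (i : Fin (2*t)) : ℤ :=
  (π i.castSucc : ℤ) - (π i.succ : ℤ)

lemma sum_dd {t n : ℕ} (π : Fin (2*t+1) → Fin n) (hπ : π 0 = π (Fin.last (2*t))) :
    ∑ i, dd π i = 0 := by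
  set g : ℕ → ℤ := fun m => (π ⟨min m (2*t), by omega⟩ : ℤ) with hg
  have key : ∀ i : Fin (2*t), dd π i = g i.val - g (i.val+1) := by
    intro i
    have h1 : i.castSucc = (⟨min i.val (2*t), by omega⟩ : Fin (2*t+1)) :=
      Fin.ext (by simp [Nat.min_eq_left i.isLt.le])
    have h2 : i.succ = (⟨min (i.val+1) (2*t), by omega⟩ : Fin (2*t+1)) :=
      Fin.ext (by simp [Nat.min_eq_left i.isLt])
    rw [dd, h1, h2]
  calc ∑ i, dd π i = ∑ i : Fin (2*t), (g i.val - g (i.val+1)) := by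
        exact Finset.sum_congr rfl fun i _ => key i
    _ = ∑ m ∈ Finset.range (2*t), (g m - g (m+1)) := Fin.sum_univ_eq_sum_range (fun m => g m - g (m+1)) (2*t)
    _ = g 0 - g (2*t) := Finset.sum_range_sub' g (2*t)
    _ = 0 := by
        have h0 : (⟨min 0 (2*t), by omega⟩ : Fin (2*t+1)) = 0 := Fin.ext (by simp)
        have hl : (⟨min (2*t) (2*t), by omega⟩ : Fin (2*t+1)) = Fin.last (2*t) := Fin.ext (by simp)
        simp only [hg, h0, hl, hπ, sub_self]

noncomputable def genSet {h : ℕ} (w : Fin h → ℕ) : Finset (Fin h) :=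
  @Finset.filter _ (IsGen w) (Classical.decPred _) Finset.univ

lemma mem_genSet {h : ℕ} {w : Fin h → ℕ} {i : Fin h} : i ∈ genSet w ↔ IsGen w i := by
  simp [genSet]

lemma card_genSet {t : ℕ} {w : Fin (2*t) → ℕ} (hw : PairMatched w) :
    (genSet w).card = t := by
  have hbij : (genSet w).card = (genSet w)ᶜ.card := by
    apply Finset.card_nbij (i := partner w)
    · intro a ha
      simp only [Finset.coe_compl, Set.mem_compl_iff, Finset.mem_coe, Finset.mem_compl, mem_genSet] at *
      exact not_isGen_partner hw ha
    · intro a ha b hb hab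
      have := congrArg (partner w) hab
      rwa [partner_partner hw, partner_partner hw] at this
    · intro b hb
      simp only [Finset.coe_compl, Set.mem_compl_iff, Finset.mem_coe, mem_genSet] at hb
      exact ⟨partner w b, by simp only [Finset.mem_coe, mem_genSet]; exact isGen_partner_of_not hw hb,
        partner_partner hw b⟩
  have htot : (genSet w).card + (genSet w)ᶜ.card = 2*t := by
    rw [Finset.card_add_card_compl]; simp
  omega

lemma dd_rel_gen {t n : ℕ} {w : Fin (2*t) → ℕ} (hw : PairMatched w) {l : Fin (2*t) → ℤ}
    {π : Fin (2*t+1) → Fin n} (hπ : π ∈ toepStarSigned t n w l) {i : Fin (2*t)}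
    (hi : IsGen w i) : dd π i = l i * dd π (partner w i) :=
  hπ.2 i (partner w i) hi (Ne.symm (partner_spec hw i).1) (partner_spec hw i).2

lemma dd_rel_nongen {t n : ℕ} {w : Fin (2*t) → ℕ} (hw : PairMatched w) {l : Fin (2*t) → ℤ}
    (hl : ∀ i, l i = 1 ∨ l i = -1)
    {π : Fin (2*t+1) → Fin n} (hπ : π ∈ toepStarSigned t n w l) {i : Fin (2*t)}
    (hi : ¬ IsGen w i) : dd π i = l (partner w i) * dd π (partner w i) := by
  have h1 := dd_rel_gen hw hπ (isGen_partner_of_not hw hi)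
  rw [partner_partner hw] at h1
  rcases hl (partner w i) with h | h <;> rw [h] at h1 ⊢ <;> omega

lemma sum_G1 {t n : ℕ} {w : Fin (2*t) → ℕ} (hw : PairMatched w) {l : Fin (2*t) → ℤ}
    (hl : ∀ i, l i = 1 ∨ l i = -1)
    {π : Fin (2*t+1) → Fin n} (hπ : π ∈ toepStarSigned t n w l) :
    ∑ i ∈ (genSet w).filter (fun i => l i = 1), dd π i = 0 := by
  classical
  have h0 : ∑ i, dd π i = 0 := sum_dd π hπ.1.1
  have hsplit : ∑ i ∈ genSet w, dd π i + ∑ i ∈ (genSet w)ᶜ, dd π i = ∑ i, dd π i :=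
    Finset.sum_add_sum_compl _ _
  have hcompl : ∑ i ∈ (genSet w)ᶜ, dd π i = ∑ i ∈ genSet w, dd π (partner w i) := by
    apply Finset.sum_nbij' (i := partner w) (j := partner w)
    · intro a ha
      simp only [Finset.mem_compl, mem_genSet] at ha ⊢
      exact isGen_partner_of_not hw ha
    · intro a ha
      simp only [Finset.mem_compl, mem_genSet] at ha ⊢
      exact not_isGen_partner hw ha
    · intro a _; exact partner_partner hw a
    · intro a _; exact partner_partner hw a
    · intro a _
      rw [partner_partner hw]
  have hpair : ∑ i ∈ genSet w, (dd π i + dd π (partner w i)) = ∑ i ∈ genSet w, (1 + l i) * dd π i := by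
    apply Finset.sum_congr rfl
    intro i hi
    have h1 := dd_rel_gen hw hπ (mem_genSet.mp hi)
    rcases hl i with h | h <;> rw [h] at h1 ⊢ <;> ring_nf <;> omega
  have hfil : ∑ i ∈ genSet w, (1 + l i) * dd π i
      = ∑ i ∈ (genSet w).filter (fun i => l i = 1), 2 * dd π i := by
    rw [← Finset.sum_filter_add_sum_filter_not (genSet w) (fun i => l i = 1)]
    have hz : ∑ i ∈ (genSet w).filter (fun i => ¬ l i = 1),
        (1 + l i) * dd π i = 0 := by
      apply Finset.sum_eq_zero
      intro i hi
      have hm : l i = -1 := by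
        rcases hl i with h | h
        · exact absurd h (Finset.mem_filter.mp hi).2
        · exact h
      rw [hm]; ring
    rw [hz, add_zero]
    apply Finset.sum_congr rfl
    intro i hi
    rw [(Finset.mem_filter.mp hi).2]; ring
  have hdistrib : ∑ i ∈ genSet w, (dd π i + dd π (partner w i))
      = ∑ i ∈ genSet w, dd π i + ∑ i ∈ genSet w, dd π (partner w i) :=
    Finset.sum_add_distrib
  have hmul : ∑ i ∈ (genSet w).filter (fun i => l i = 1), 2 * dd π i
      = 2 * ∑ i ∈ (genSet w).filter (fun i => l i = 1), dd π i :=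
    (Finset.mul_sum _ _ _).symm
  rw [hcompl] at hsplit
  rw [hdistrib, hsplit, h0, hfil, hmul] at hpair
  omega

lemma dd_eq_all {t n : ℕ} {w : Fin (2*t) → ℕ} (hw : PairMatched w) {l : Fin (2*t) → ℤ}
    (hl : ∀ i, l i = 1 ∨ l i = -1) {i₀ : Fin (2*t)} (hi₀ : IsGen w i₀) (hli₀ : l i₀ = 1)
    {π π' : Fin (2*t+1) → Fin n}
    (hπ : π ∈ toepStarSigned t n w l) (hπ' : π' ∈ toepStarSigned t n w l)
    (hd : ∀ i ∈ (genSet w).erase i₀, dd π i = dd π' i) : ∀ i, dd π i = dd π' i := by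
  have hmem : i₀ ∈ (genSet w).filter (fun i => l i = 1) :=
    Finset.mem_filter.mpr ⟨mem_genSet.mpr hi₀, hli₀⟩
  have herase : ∀ i ∈ ((genSet w).filter (fun i => l i = 1)).erase i₀, dd π i = dd π' i := by
    intro i hi
    rw [Finset.mem_erase] at hi
    exact hd i (Finset.mem_erase.mpr ⟨hi.1, Finset.filter_subset _ _ hi.2⟩)
  have hi0 : dd π i₀ = dd π' i₀ := by
    have h1 := sum_G1 hw hl hπ
    have h2 := sum_G1 hw hl hπ'
    rw [← Finset.add_sum_erase _ _ hmem] at h1 h2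
    have hsum : ∑ x ∈ ((genSet w).filter fun i => l i = 1).erase i₀, dd π x
        = ∑ x ∈ ((genSet w).filter fun i => l i = 1).erase i₀, dd π' x :=
      Finset.sum_congr rfl herase
    omega
  have hgen : ∀ i ∈ genSet w, dd π i = dd π' i := by
    intro i hi
    by_cases h : i = i₀
    · rw [h]; exact hi0
    · exact hd i (Finset.mem_erase.mpr ⟨h, hi⟩)
  intro i
  by_cases h : IsGen w i
  · exact hgen i (mem_genSet.mpr h)
  · rw [dd_rel_nongen hw hl hπ h, dd_rel_nongen hw hl hπ' h,
      hgen _ (mem_genSet.mpr (isGen_partner_of_not hw h))]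

lemma pi_eq {t n : ℕ} {π π' : Fin (2*t+1) → Fin n}
    (h0 : π 0 = π' 0) (hd : ∀ i, dd π i = dd π' i) : π = π' := by
  have key : ∀ m (hm : m < 2*t+1), π ⟨m, hm⟩ = π' ⟨m, hm⟩ := by
    intro m
    induction m with
    | zero => intro hm; simpa using h0
    | succ k ih =>
      intro hm
      have hk : k < 2*t := by omega
      have h1 := hd ⟨k, hk⟩
      have h2 := ih (by omega)
      rw [dd, dd] at h1
      have hc : (⟨k, hk⟩ : Fin (2*t)).castSucc = (⟨k, by omega⟩ : Fin (2*t+1)) := rfl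
      have hs : (⟨k, hk⟩ : Fin (2*t)).succ = (⟨k+1, hm⟩ : Fin (2*t+1)) := rfl
      rw [hc, hs, h2] at h1
      have : ((π ⟨k+1, hm⟩ : ℕ) : ℤ) = ((π' ⟨k+1, hm⟩ : ℕ) : ℤ) := by omega
      exact Fin.ext (by exact_mod_cast this)
  funext x
  exact key x.val x.isLt

lemma ncard_bound {t n : ℕ} {w : Fin (2*t) → ℕ} (hw : PairMatched w) {l : Fin (2*t) → ℤ}
    (hl : ∀ i, l i = 1 ∨ l i = -1) {i₀ : Fin (2*t)} (hi₀ : IsGen w i₀) (hli₀ : l i₀ = 1) :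
    (toepStarSigned t n w l).ncard ≤ n * (2*n+1)^(t-1) := by
  classical
  set A : Finset (Fin (2*t)) := (genSet w).erase i₀ with hA
  have hAcard : A.card = t - 1 := by
    rw [hA, Finset.card_erase_of_mem (mem_genSet.mpr hi₀), card_genSet hw]
  set S := toepStarSigned t n w l with hS
  have hmem : ∀ π ∈ S, ∀ a : A, dd π a.1 ∈ Finset.Icc (-(n:ℤ)) n := by
    intro π _ a
    rw [Finset.mem_Icc, dd]
    have h1 := (π a.1.castSucc).isLt
    have h2 := (π a.1.succ).isLt
    omega
  classical
  set F : (Fin (2*t+1) → Fin n) → Fin n × (A → (Finset.Icc (-(n:ℤ)) n : Finset ℤ)) :=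
    fun π => (π 0, fun a => if hπ : π ∈ S then ⟨dd π a.1, hmem π hπ a⟩ else ⟨0, by simp⟩) with hF
  have hinj : Set.InjOn F S := by
    intro π hπ π' hπ' heq
    apply pi_eq (congrArg Prod.fst heq)
    apply dd_eq_all hw hl hi₀ hli₀ hπ hπ'
    intro i hi
    have := congrFun (congrArg Prod.snd heq) ⟨i, hi⟩
    rw [hF] at this
    simp only [dif_pos hπ, dif_pos hπ'] at this
    exact congrArg Subtype.val this
  calc S.ncard = (F '' S).ncard := (Set.ncard_image_of_injOn hinj).symm
    _ ≤ (Set.univ : Set (Fin n × (A → (Finset.Icc (-(n:ℤ)) n : Finset ℤ)))).ncard :=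
        Set.ncard_le_ncard (Set.subset_univ _) Set.finite_univ
    _ = Fintype.card (Fin n × (A → (Finset.Icc (-(n:ℤ)) n : Finset ℤ))) := by
        rw [Set.ncard_univ, Nat.card_eq_fintype_card]
    _ = n * (2*n+1)^(t-1) := by
        rw [Fintype.card_prod, Fintype.card_fin, Fintype.card_fun, Fintype.card_coe,
          Fintype.card_coe, Int.card_Icc, hAcard]
        congr 1
        congr 1
        omega

/-- For a pair-matched word `w` of length `2t` and a sign vector `l` with some
coordinate at a generating vertex equal to `+1` (i.e. `l ≠ (−1,…,−1)`),
`#Π*_{L_T,k,l}(w)/k^{t+1} → 0` as `k → ∞`. -/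
theorem toepStarSigned_limit_zero (t : ℕ) (w : Fin (2 * t) → ℕ)
    (hw : PairMatched w) (l : Fin (2 * t) → ℤ)
    (hl : ∀ i, l i = 1 ∨ l i = -1) (hl' : ∃ i, IsGen w i ∧ l i = 1) :
    Tendsto (fun k : ℕ => ((toepStarSigned t k w l).ncard : ℝ) / (k : ℝ) ^ (t + 1))
      atTop (nhds 0) := by
  obtain ⟨i₀, hgen, hl1⟩ := hl'
  have ht : 0 < t := by have := i₀.isLt; omega
  obtain ⟨s, rfl⟩ : ∃ s, t = s + 1 := ⟨t - 1, by omega⟩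
  apply tendsto_of_tendsto_of_tendsto_of_le_of_le' tendsto_const_nhds
    (tendsto_const_div_atTop_nhds_zero_nat ((3:ℝ)^s))
  · filter_upwards with k
    positivity
  · filter_upwards [eventually_ge_atTop 1] with k hk
    have hk1 : (1:ℝ) ≤ (k:ℝ) := by exact_mod_cast hk
    have hk0 : (0:ℝ) < (k:ℝ) := by linarith
    have hb : ((toepStarSigned (s+1) k w l).ncard : ℝ) ≤ (k:ℝ) * (2*(k:ℝ)+1)^s := by
      have h := ncard_bound (n := k) hw hl hgen hl1
      calc ((toepStarSigned (s+1) k w l).ncard : ℝ)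
          ≤ ((k * (2*k+1)^((s+1)-1) : ℕ) : ℝ) := by exact_mod_cast h
        _ = (k:ℝ) * (2*(k:ℝ)+1)^s := by push_cast; ring
    have h23 : (k:ℝ)*(2*(k:ℝ)+1)^s ≤ 3^s * (k:ℝ)^(s+1) := by
      have h2 : ((2*(k:ℝ)+1))^s ≤ (3*(k:ℝ))^s :=
        pow_le_pow_left₀ (by positivity) (by linarith) s
      calc (k:ℝ)*(2*(k:ℝ)+1)^s ≤ (k:ℝ)*(3*(k:ℝ))^s :=
            mul_le_mul_of_nonneg_left h2 hk0.le
        _ = 3^s * (k:ℝ)^(s+1) := by rw [mul_pow, pow_succ]; ring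
    calc ((toepStarSigned (s+1) k w l).ncard : ℝ) / (k:ℝ)^(s+1+1)
        ≤ ((k:ℝ)*(2*(k:ℝ)+1)^s) / (k:ℝ)^(s+1+1) := by gcongr
      _ ≤ (3^s * (k:ℝ)^(s+1)) / (k:ℝ)^(s+1+1) := by gcongr
      _ = 3^s / (k:ℝ) := by
          rw [mul_comm ((3:ℝ)^s) _, pow_succ ((k:ℝ)) (s+1),
            mul_div_mul_left _ _ (by positivity : (k:ℝ)^(s+1) ≠ 0)]
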